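/- The metric space $X=\{((a_i)_{i=1}^\infty,k): k\in\mathbb{Z}^+,\ a_i\in\mathbb{Z},\ a_i=0\text{ for }i>k\}\subseteq(\bigoplus_{i=1}^\infty\mathbb{Z})\times\mathbb{Z}$, with metric $d_1(((x_i),a),((y_i),b))=\sum_{i=1}^\infty|x_i-y_i|+|b-a|$, does not have asymptotic property C. -/

import Mathlib

namespace EptNoApc
open Finset

variable {m : ℕ}

def D (v w : Fin m → ℤ) : ℕ := ∑ i, (v i - w i).natAbs

def step (t : Fin m → ℤ) (i : Fin m) : Fin m → ℤ := t + Pi.single i 1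

lemma step_apply (t : Fin m → ℤ) (i j : Fin m) :
    step t i j = t j + if j = i then 1 else 0 := by
  simp [step, Pi.single_apply]

lemma step_inj (t t' : Fin m → ℤ) (i : Fin m) (h : step t i = step t' i) : t = t' := by
  funext j
  have := congrFun h j
  rw [step_apply, step_apply] at this
  omega

lemma D_comm (v w : Fin m → ℤ) : D v w = D w v :=
  Finset.sum_congr rfl fun i _ => by omega

lemma D_triangle (u v w : Fin m → ℤ) : D u w ≤ D u v + D v w := by
  unfold D
  rw [← Finset.sum_add_distrib]
  exact Finset.sum_le_sum fun i _ => by omega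

lemma D_step (t : Fin m → ℤ) (i : Fin m) : D (step t i) t = 1 := by
  unfold D
  have h : ∀ j, (step t i j - t j).natAbs = if j = i then 1 else 0 := by
    intro j
    by_cases h : j = i <;> simp [step_apply, h]
  rw [Finset.sum_congr rfl fun j _ => h j]
  simp

lemma card_ne_le {v w : Fin m → ℤ} {c : ℕ} (h : D v w ≤ c) :
    #(univ.filter fun i => v i ≠ w i) ≤ c := by
  refine le_trans ?_ h
  unfold D
  calc #(univ.filter fun i => v i ≠ w i)
      = ∑ i ∈ univ.filter fun i => v i ≠ w i, 1 := by rw [Finset.card_eq_sum_ones]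
    _ ≤ ∑ i ∈ univ.filter fun i => v i ≠ w i, (v i - w i).natAbs := by
        refine Finset.sum_le_sum fun i hi => ?_
        have := (Finset.mem_filter.1 hi).2
        omega
    _ ≤ ∑ i, (v i - w i).natAbs := Finset.sum_le_sum_of_subset (Finset.filter_subset _ _)

lemma card_prod_filter (T : Finset (Fin m → ℤ)) (p : (Fin m → ℤ) → Fin m → Prop)
    [∀ t i, Decidable (p t i)] :
    #((T ×ˢ univ).filter fun q => p q.1 q.2) = ∑ t ∈ T, #(univ.filter fun i => p t i) := by
  classical
  rw [Finset.card_filter, Finset.sum_product]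
  exact Finset.sum_congr rfl fun t _ => by rw [Finset.card_filter]

lemma expansion {b : ℕ} (T : Finset (Fin m → ℤ)) (hT : T.Nonempty)
    (hdiam : ∀ v ∈ T, ∀ w ∈ T, D v w ≤ b) :
    ∃ Y : Finset (Fin m → ℤ),
      (∀ y ∈ Y, y ∉ T) ∧
      (∀ y ∈ Y, ∃ t ∈ T, ∃ i : Fin m, y = step t i) ∧
      m * #T ≤ (b + 1) * #Y + 2 * b * #T := by
  classical
  obtain ⟨t0, ht0⟩ := hT
  set Y : Finset (Fin m → ℤ) :=
    (((T ×ˢ univ).filter fun q => q.1 q.2 = t0 q.2 ∧ step q.1 q.2 ∉ T).image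
      fun q => step q.1 q.2) with hY
  have hmemY : ∀ y ∈ Y, ∃ t ∈ T, ∃ i : Fin m, y = step t i ∧ t i = t0 i := by
    intro y hy
    obtain ⟨q, hq, rfl⟩ := Finset.mem_image.1 hy
    exact ⟨q.1, (Finset.mem_product.1 (Finset.mem_filter.1 hq).1).1, q.2, rfl,
      (Finset.mem_filter.1 hq).2.1⟩
  have hYnotT : ∀ y ∈ Y, y ∉ T := by
    intro y hy
    obtain ⟨q, hq, rfl⟩ := Finset.mem_image.1 hy
    exact (Finset.mem_filter.1 hq).2.2
  refine ⟨Y, hYnotT, fun y hy => by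
    obtain ⟨t, ht, i, hi, -⟩ := hmemY y hy; exact ⟨t, ht, i, hi⟩, ?_⟩
  -- counting
  -- Y distance bound: every y ∈ Y has few coords equal to t0+1
  have hYfib : ∀ y ∈ Y, #(univ.filter fun i => y i = t0 i + 1) ≤ b + 1 := by
    intro y hy
    obtain ⟨t, ht, i, rfl, -⟩ := hmemY y hy
    have hD : D (step t i) t0 ≤ b + 1 := by
      calc D (step t i) t0 ≤ D (step t i) t + D t t0 := D_triangle _ _ _
        _ ≤ 1 + b := add_le_add (le_of_eq (D_step t i)) (hdiam t ht t0 ht0)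
        _ = b + 1 := by omega
    refine le_trans (Finset.card_le_card ?_) (card_ne_le hD)
    intro j hj
    simp only [Finset.mem_filter, Finset.mem_univ, true_and] at hj ⊢
    omega
  -- pairs.card ≤ (b+1) * #Y
  have hpairsY :
      #((T ×ˢ univ).filter fun q => q.1 q.2 = t0 q.2 ∧ step q.1 q.2 ∉ T) ≤ (b + 1) * #Y := by
    rw [hY]
    refine Finset.card_le_mul_card_image _ _ ?_
    intro y hy
    rw [← hY] at hy
    refine le_trans ?_ (hYfib y hy)
    refine Finset.card_le_card_of_injOn (fun q => q.2) ?_ ?_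
    · intro q hq
      simp only [Finset.mem_coe, Finset.mem_filter] at hq
      obtain ⟨⟨hq1, hq2, hq3⟩, hq4⟩ := hq
      simp only [Finset.mem_coe, Finset.mem_filter, Finset.mem_univ, true_and]
      have := congrFun hq4 q.2
      rw [step_apply] at this
      simp at this
      omega
    · intro q hq q' hq' hqq
      simp only [Finset.mem_coe, Finset.mem_filter] at hq hq'
      have h2 : q.2 = q'.2 := hqq
      have h1 : q.1 = q'.1 := by
        apply step_inj _ _ q.2
        rw [hq.2, h2, hq'.2]
      exact Prod.ext h1 h2
  -- edges bound
  have hedge :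
      #((T ×ˢ univ).filter fun q => q.1 q.2 = t0 q.2 ∧ step q.1 q.2 ∈ T) ≤ b * #T := by
    have hsub : #((T ×ˢ univ).filter fun q => q.1 q.2 = t0 q.2 ∧ step q.1 q.2 ∈ T)
        ≤ #((T ×ˢ univ).filter fun r => r.1 r.2 = t0 r.2 + 1) := by
      refine Finset.card_le_card_of_injOn (fun q => (step q.1 q.2, q.2)) ?_ ?_
      · intro q hq
        simp only [Finset.mem_coe, Finset.mem_filter, Finset.mem_product, Finset.mem_univ, and_true] at hq ⊢
        refine ⟨hq.2.2, ?_⟩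
        rw [step_apply]
        simp [hq.2.1]
      · intro q hq q' hq' hqq
        have hqq' : (step q.1 q.2, q.2) = (step q'.1 q'.2, q'.2) := hqq
        obtain ⟨h1, h2⟩ := Prod.mk.inj hqq'
        rw [← h2] at h1
        exact Prod.ext (step_inj _ _ _ h1) h2
    refine le_trans hsub ?_
    rw [card_prod_filter T (fun t i => t i = t0 i + 1)]
    calc ∑ t ∈ T, #(univ.filter fun i => t i = t0 i + 1)
        ≤ ∑ _t ∈ T, b := by
          refine Finset.sum_le_sum fun t ht => ?_
          refine le_trans (Finset.card_le_card ?_) (card_ne_le (hdiam t ht t0 ht0))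
          intro j hj
          simp only [Finset.mem_filter, Finset.mem_univ, true_and] at hj ⊢
          omega
      _ = b * #T := by rw [Finset.sum_const, smul_eq_mul, mul_comm]
  -- row lower bound
  have hrow : m * #T ≤
      #((T ×ˢ univ).filter fun q => q.1 q.2 = t0 q.2 ∧ step q.1 q.2 ∉ T)
      + #((T ×ˢ univ).filter fun q => q.1 q.2 = t0 q.2 ∧ step q.1 q.2 ∈ T)
      + b * #T := by
    rw [card_prod_filter T (fun t i => t i = t0 i ∧ step t i ∉ T),
      card_prod_filter T (fun t i => t i = t0 i ∧ step t i ∈ T)]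
    have hm : m * #T = ∑ _t ∈ T, m := by rw [Finset.sum_const, smul_eq_mul, mul_comm]
    have hbT : b * #T = ∑ _t ∈ T, b := by rw [Finset.sum_const, smul_eq_mul, mul_comm]
    rw [hm, hbT, ← Finset.sum_add_distrib, ← Finset.sum_add_distrib]
    refine Finset.sum_le_sum fun t ht => ?_
    have hsplit := Finset.card_filter_add_card_filter_not
      (s := univ.filter fun i => t i = t0 i) (p := fun i => step t i ∉ T)
    simp only [Finset.filter_filter, not_not] at hsplit
    have htot := Finset.card_filter_add_card_filter_not
      (s := (univ : Finset (Fin m))) (p := fun i => t i = t0 i)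
    rw [Finset.card_univ, Fintype.card_fin] at htot
    have hne : #(univ.filter fun i => ¬ t i = t0 i) ≤ b := by
      have := card_ne_le (hdiam t ht t0 ht0)
      convert this using 2
    omega
  have h2b : 2 * b * #T = b * #T + b * #T := by ring
  omega


lemma assembly {n b L m : ℕ} (hm : m = 2 * (n + 1) * (b + 1) + 2 * b)
    {κ : Type*} (π : κ → Fin (n + 1)) (g : (Fin m → ℤ) → κ)
    (Hdiam : ∀ v w : Fin m → ℤ, g v = g w → D v w ≤ b)
    (Hsep : ∀ v w : Fin m → ℤ, π (g v) = π (g w) → g v ≠ g w → 3 ≤ D v w) :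
    2 * (L + 1) ^ m ≤ (L + 2) ^ m := by
  classical
  set W : Finset (Fin m → ℤ) := Finset.Icc 0 (fun _ => (L : ℤ)) with hW
  set W₁ : Finset (Fin m → ℤ) := Finset.Icc 0 (fun _ => (L : ℤ) + 1) with hW₁
  have hWcard : #W = (L + 1) ^ m := by
    rw [hW, Pi.card_Icc]
    have h1 : ∀ i ∈ (univ : Finset (Fin m)),
        #(Finset.Icc ((0 : Fin m → ℤ) i) ((fun _ => (L : ℤ)) i)) = L + 1 := by
      intro i _
      show #(Finset.Icc (0 : ℤ) (L : ℤ)) = L + 1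
      rw [Int.card_Icc]
      omega
    rw [Finset.prod_congr rfl h1, Finset.prod_const, Finset.card_univ, Fintype.card_fin]
  have hW₁card : #W₁ = (L + 2) ^ m := by
    rw [hW₁, Pi.card_Icc]
    have h1 : ∀ i ∈ (univ : Finset (Fin m)),
        #(Finset.Icc ((0 : Fin m → ℤ) i) ((fun _ => (L : ℤ) + 1) i)) = L + 2 := by
      intro i _
      show #(Finset.Icc (0 : ℤ) ((L : ℤ) + 1)) = L + 2
      rw [Int.card_Icc]
      omega
    rw [Finset.prod_congr rfl h1, Finset.prod_const, Finset.card_univ, Fintype.card_fin]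
  -- fibers
  have hfib : ∀ p ∈ W.image g, ∃ Y : Finset (Fin m → ℤ),
      (∀ y ∈ Y, y ∉ W.filter fun v => g v = p) ∧
      (∀ y ∈ Y, ∃ t ∈ W.filter (fun v => g v = p), ∃ i : Fin m, y = step t i) ∧
      m * #(W.filter fun v => g v = p) ≤ (b + 1) * #Y + 2 * b * #(W.filter fun v => g v = p) := by
    intro p hp
    obtain ⟨v, hv, hgv⟩ := Finset.mem_image.1 hp
    refine expansion _ ⟨v, Finset.mem_filter.2 ⟨hv, hgv⟩⟩ ?_
    intro x hx y hy
    exact Hdiam x y ((Finset.mem_filter.1 hx).2.trans (Finset.mem_filter.1 hy).2.symm)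
  choose Yf hY1 hY2 hY3 using hfib
  -- key per-piece inequality : 2*(n+1)* fiber ≤ #Y
  have hkey : ∀ p (hp : p ∈ W.image g),
      2 * (n + 1) * #(W.filter fun v => g v = p) ≤ #(Yf p hp) := by
    intro p hp
    have h3 := hY3 p hp
    have hformula' : ∀ F : ℕ, m * F = 2 * (n + 1) * (b + 1) * F + 2 * b * F := by
      intro F; rw [hm]; ring
    have hformula := hformula' #(W.filter fun v => g v = p)
    have h5 : 2 * (n + 1) * (b + 1) * #(W.filter fun v => g v = p)
        ≤ (b + 1) * #(Yf p hp) := by linarith [h3, hformula]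
    have h6 : (b + 1) * (2 * (n + 1) * #(W.filter fun v => g v = p))
        ≤ (b + 1) * #(Yf p hp) := by
      calc (b + 1) * (2 * (n + 1) * #(W.filter fun v => g v = p))
          = 2 * (n + 1) * (b + 1) * #(W.filter fun v => g v = p) := by ring
        _ ≤ (b + 1) * #(Yf p hp) := h5
    exact Nat.le_of_mul_le_mul_left h6 (by omega)
  -- Y's are in W₁
  have hYW₁ : ∀ p (hp : p ∈ W.image g), Yf p hp ⊆ W₁ := by
    intro p hp y hy
    obtain ⟨t, ht, i, rfl⟩ := hY2 p hp y hy
    have htW : t ∈ W := (Finset.mem_filter.1 ht).1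
    rw [hW, Finset.mem_Icc] at htW
    rw [hW₁, Finset.mem_Icc]
    constructor
    · intro j
      have h1 := htW.1 j
      simp only [Pi.zero_apply] at h1 ⊢
      rw [step_apply]
      have : (if j = i then (1:ℤ) else 0) = 1 ∨ (if j = i then (1:ℤ) else 0) = 0 := by
        split <;> simp
      omega
    · intro j
      have h2 := htW.2 j
      simp only at h2 ⊢
      rw [step_apply]
      have : (if j = i then (1:ℤ) else 0) = 1 ∨ (if j = i then (1:ℤ) else 0) = 0 := by
        split <;> simp
      omega
  -- Y's of distinct pieces with same color are disjoint
  have hYdisj : ∀ p (hp : p ∈ W.image g), ∀ q (hq : q ∈ W.image g), p ≠ q → π p = π q →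
      Disjoint (Yf p hp) (Yf q hq) := by
    intro p hp q hq hpq hπ
    rw [Finset.disjoint_left]
    intro x hxp hxq
    obtain ⟨t, ht, i, he0⟩ := hY2 p hp x hxp
    obtain ⟨t', ht', i', he⟩ := hY2 q hq x hxq
    subst he0
    have hgt : g t = p := (Finset.mem_filter.1 ht).2
    have hgt' : g t' = q := (Finset.mem_filter.1 ht').2
    have hD : D t t' ≤ 2 := by
      calc D t t' ≤ D t (step t i) + D (step t i) t' := D_triangle _ _ _
        _ ≤ 1 + 1 := by
            have e1 : D t (step t i) = 1 := by rw [D_comm]; exact D_step t i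
            have e2 : D (step t i) t' = 1 := by rw [he]; exact D_step t' i'
            omega
        _ = 2 := rfl
    have := Hsep t t' (by rw [hgt, hgt', hπ]) (by rw [hgt, hgt']; exact hpq)
    omega
  -- sum it up
  have hcover : #W = ∑ p ∈ (W.image g).attach, #(W.filter fun v => g v = p.1) := by
    rw [Finset.card_eq_sum_card_image g W]
    exact (Finset.sum_attach _ _).symm
  have hsum1 : 2 * (n + 1) * #W ≤ ∑ p ∈ (W.image g).attach, #(Yf p.1 p.2) := by
    rw [hcover, Finset.mul_sum]
    exact Finset.sum_le_sum fun p _ => hkey p.1 p.2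
  have hsum2 : ∑ p ∈ (W.image g).attach, #(Yf p.1 p.2) ≤ (n + 1) * #W₁ := by
    have hmaps : ∀ p ∈ (W.image g).attach, π p.1 ∈ (univ : Finset (Fin (n+1))) :=
      fun p _ => Finset.mem_univ _
    rw [← Finset.sum_fiberwise_of_maps_to hmaps (fun p => #(Yf p.1 p.2))]
    have : ∀ i ∈ (univ : Finset (Fin (n+1))),
        ∑ p ∈ (W.image g).attach.filter (fun p => π p.1 = i), #(Yf p.1 p.2) ≤ #W₁ := by
      intro i _
      rw [← Finset.card_biUnion]
      · apply Finset.card_le_card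
        intro x hx
        obtain ⟨p, hp, hxp⟩ := Finset.mem_biUnion.1 hx
        exact hYW₁ p.1 p.2 hxp
      · intro p hp q hq hpq
        have hπp : π p.1 = i := (Finset.mem_filter.1 hp).2
        have hπq : π q.1 = i := (Finset.mem_filter.1 hq).2
        exact hYdisj p.1 p.2 q.1 q.2 (fun h => hpq (Subtype.ext h)) (hπp.trans hπq.symm)
    calc ∑ i : Fin (n+1), ∑ p ∈ (W.image g).attach.filter (fun p => π p.1 = i), #(Yf p.1 p.2)
        ≤ ∑ _i : Fin (n+1), #W₁ := Finset.sum_le_sum this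
      _ = (n + 1) * #W₁ := by rw [Finset.sum_const, smul_eq_mul, Finset.card_univ, Fintype.card_fin]
  have : 2 * (n + 1) * #W ≤ (n + 1) * #W₁ := le_trans hsum1 hsum2
  rw [hWcard, hW₁card] at this
  have h2 : (n + 1) * (2 * (L + 1) ^ m) ≤ (n + 1) * (L + 2) ^ m := by nlinarith [this]
  exact Nat.le_of_mul_le_mul_left h2 (by omega)


lemma growth {m : ℕ} (hm : 1 ≤ m) (h : ∀ L : ℕ, 2 * (L + 1) ^ m ≤ (L + 2) ^ m) : False := by
  have key : ∀ j : ℕ, 2 ^ j ≤ (j + 1) ^ m := by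
    intro j
    induction j with
    | zero => simpa using Nat.one_le_pow m 1 (by omega)
    | succ j ih =>
      calc 2 ^ (j + 1) = 2 * 2 ^ j := by ring
        _ ≤ 2 * (j + 1) ^ m := by omega
        _ ≤ (j + 1 + 1) ^ m := by
            have := h j
            convert this using 3 <;> omega
  have h1 : m + 1 ≤ 2 ^ m := Nat.succ_le_of_lt (Nat.lt_two_pow_self (n := m))
  have h2 : (m + 1) ^ 2 ≤ 2 ^ (2 * m) := by
    calc (m + 1) ^ 2 ≤ (2 ^ m) ^ 2 := Nat.pow_le_pow_left h1 2
      _ = 2 ^ (2 * m) := by rw [← pow_mul]; ring_nf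
  have h3 : m * (2 * m + 2) + 1 < 2 ^ (2 * m + 2) := by
    have h4 : 2 ^ (2 * m + 2) = 4 * 2 ^ (2 * m) := by ring
    nlinarith [h2]
  have h5 : (m * (2 * m + 2) + 1) ^ m < 2 ^ (m * (2 * m + 2)) := by
    calc (m * (2 * m + 2) + 1) ^ m < (2 ^ (2 * m + 2)) ^ m :=
          Nat.pow_lt_pow_left h3 (by omega)
      _ = 2 ^ (m * (2 * m + 2)) := by rw [← pow_mul]; ring_nf
  exact absurd (key (m * (2 * m + 2))) (not_le.2 h5)


end EptNoApc

noncomputable section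
open Metric Set
open scoped ENNReal

/-- A family of subsets is `R`-bounded if every member has diameter at most `R`. -/
def RBounded {X : Type*} [PseudoMetricSpace X] (R : ℝ) (U : Set (Set X)) : Prop :=
  ∀ A ∈ U, ∀ x ∈ A, ∀ y ∈ A, dist x y ≤ R

/-- A family of subsets is `r`-disjoint if distinct members are at distance at least `r`. -/
def RDisjoint {X : Type*} [PseudoMetricSpace X] (r : ℝ) (U : Set (Set X)) : Prop :=
  ∀ A ∈ U, ∀ B ∈ U, A ≠ B → ∀ x ∈ A, ∀ y ∈ B, r ≤ dist x y

/-- A family of subsets is uniformly bounded if it is `R`-bounded for some `R`. -/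
def UniformlyBounded {X : Type*} [PseudoMetricSpace X] (U : Set (Set X)) : Prop :=
  ∃ R : ℝ, RBounded R U

/-- `asdim X ≤ n`: for every `r > 0` there are `n+1` uniformly bounded, `r`-disjoint
families of subsets of `X` whose union covers `X`. -/
def AsdimLE (X : Type*) [PseudoMetricSpace X] (n : ℕ) : Prop :=
  ∀ r : ℝ, 0 < r → ∃ U : Fin (n + 1) → Set (Set X),
    (∀ i, UniformlyBounded (U i)) ∧ (∀ i, RDisjoint r (U i)) ∧
    (Set.univ : Set X) ⊆ ⋃ i, ⋃₀ U i

/-- Uniformly expansive map. -/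
def UniformlyExpansive {X Y : Type*} [PseudoMetricSpace X] [PseudoMetricSpace Y]
    (f : X → Y) : Prop :=
  ∀ R : ℝ, 0 < R → ∃ S : ℝ, ∀ x x' : X, dist x x' ≤ R → dist (f x) (f x') ≤ S

open Fin.NatCast in
/-- Asymptotic property C. -/
def AsymptoticPropertyC (X : Type*) [PseudoMetricSpace X] : Prop :=
  ∀ R : ℕ → ℝ, StrictMono R → (∀ i, 0 < R i) →
    ∃ n : ℕ, ∃ U : Fin (n + 1) → Set (Set X),
      (∀ i, UniformlyBounded (U i)) ∧ (∀ i, RDisjoint (R i) (U i)) ∧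
      (Set.univ : Set X) ⊆ ⋃ i, ⋃₀ U i
/-- The space of Example 5.1: `{((a_i)_{i≥1}, k) : k ≥ 1, a_i = 0 for i > k}` with the
`ℓ¹`-metric `d₁`.  Here `coords n` plays the role of `a_{n+1}`. -/
structure EPt where
  lvl : ℕ
  coords : ℕ → ℤ
  lvl_pos : 1 ≤ lvl
  coords_eq_zero : ∀ i, lvl ≤ i → coords i = 0

def EPt.f (p : EPt) : Option ℕ → ℝ :=
  fun o => o.elim (p.lvl : ℝ) fun i => (p.coords i : ℝ)

lemma EPt.memlp (p : EPt) : Memℓp p.f 1 := by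
  apply memℓp_gen
  apply summable_of_finite_support
  apply Set.Finite.subset (Set.Finite.insert none ((Set.finite_Iio p.lvl).image some))
  intro x hx
  rcases x with _ | i
  · exact Set.mem_insert _ _
  · right
    refine Set.mem_image_of_mem _ ?_
    by_contra h
    apply hx
    have h0 : p.coords i = 0 := p.coords_eq_zero i (not_lt.mp h)
    simp [EPt.f, h0]

def EPt.F (p : EPt) : lp (fun _ : Option ℕ => ℝ) 1 := ⟨p.f, p.memlp⟩

instance : PseudoMetricSpace EPt := PseudoMetricSpace.induced EPt.F inferInstance

namespace EptNoApc

def P (m : ℕ) (hm : 1 ≤ m) (v : Fin m → ℤ) : EPt where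
  lvl := m
  coords := fun j => if h : j < m then v ⟨j, h⟩ else 0
  lvl_pos := hm
  coords_eq_zero := fun i hi => dif_neg (by omega)

lemma dist_P (m : ℕ) (hm : 1 ≤ m) (v w : Fin m → ℤ) :
    dist (P m hm v) (P m hm w) = (D v w : ℝ) := by
  have hd : dist (P m hm v) (P m hm w) = ‖EPt.F (P m hm v) - EPt.F (P m hm w)‖ := by
    change dist (EPt.F (P m hm v)) (EPt.F (P m hm w)) = _
    exact dist_eq_norm _ _
  rw [hd, lp.norm_eq_tsum_rpow (by norm_num : 0 < (1 : ℝ≥0∞).toReal)]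
  simp only [ENNReal.toReal_one, Real.rpow_one, div_one, one_div_one]
  have hcoe : ∀ o : Option ℕ, (↑(EPt.F (P m hm v) - EPt.F (P m hm w)) : Option ℕ → ℝ) o
      = (P m hm v).f o - (P m hm w).f o := by
    intro o
    rw [lp.coeFn_sub]
    rfl
  set s : Finset (Option ℕ) :=
    insert none ((Finset.univ : Finset (Fin m)).image fun i : Fin m => some i.val) with hs
  have h0 : ∀ o ∉ s, ‖(↑(EPt.F (P m hm v) - EPt.F (P m hm w)) : Option ℕ → ℝ) o‖ = 0 := by
    intro o ho
    rcases o with _ | j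
    · exact absurd (Finset.mem_insert_self _ _) ho
    · have hj : ¬ j < m := by
        intro hlt
        exact ho (Finset.mem_insert_of_mem
          (Finset.mem_image.2 ⟨⟨j, hlt⟩, Finset.mem_univ _, rfl⟩))
      rw [hcoe]
      simp [EPt.f, P, dif_neg hj]
  rw [tsum_eq_sum h0, hs, Finset.sum_insert (by simp)]
  have hnone : ‖(↑(EPt.F (P m hm v) - EPt.F (P m hm w)) : Option ℕ → ℝ) none‖ = 0 := by
    rw [hcoe]
    simp [EPt.f, P]
  rw [hnone, zero_add, Finset.sum_image (by intro i _ j _ h; exact Fin.val_injective (Option.some_injective _ h))]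
  have hterm : ∀ i : Fin m,
      ‖(↑(EPt.F (P m hm v) - EPt.F (P m hm w)) : Option ℕ → ℝ) (some (i : ℕ))‖
      = ((v i - w i).natAbs : ℝ) := by
    intro i
    rw [hcoe]
    have hv : (P m hm v).f (some (i : ℕ)) = ((v i : ℤ) : ℝ) := by
      simp [EPt.f, P, dif_pos i.isLt]
    have hw : (P m hm w).f (some (i : ℕ)) = ((w i : ℤ) : ℝ) := by
      simp [EPt.f, P, dif_pos i.isLt]
    rw [hv, hw, Real.norm_eq_abs, Nat.cast_natAbs]
    push_cast
    ring_nf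
  rw [Finset.sum_congr rfl fun i _ => hterm i]
  rw [D]
  push_cast
  rfl


end EptNoApc

/-- The space `X = {((a_i)_{i≥1}, k) : k ≥ 1, a_i = 0 for i > k}` with the `ℓ¹`-metric
does not have asymptotic property C. -/
theorem ept_not_apc : ¬ AsymptoticPropertyC EPt := by
  classical
  intro h
  obtain ⟨n, U, hbdd, hdisj, hcov⟩ := h (fun i => (i : ℝ) + 3)
    (fun i j hij => by
      show (i : ℝ) + 3 < (j : ℝ) + 3
      have : (i : ℝ) < (j : ℝ) := by exact_mod_cast hij
      linarith)
    (fun i => by positivity)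
  choose gB hgB using hbdd
  have hne : (Finset.univ : Finset (Fin (n + 1))).Nonempty := ⟨0, Finset.mem_univ 0⟩
  set Bsup : ℝ := Finset.univ.sup' hne gB with hBsup
  set b : ℕ := ⌈Bsup⌉₊ with hbdef
  have hb : ∀ (i : Fin (n + 1)), ∀ A ∈ U i, ∀ x ∈ A, ∀ y ∈ A, dist x y ≤ (b : ℝ) := by
    intro i A hA x hx y hy
    calc dist x y ≤ gB i := hgB i A hA x hx y hy
      _ ≤ Bsup := Finset.le_sup' gB (Finset.mem_univ i)
      _ ≤ (b : ℝ) := Nat.le_ceil _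
  set m : ℕ := 2 * (n + 1) * (b + 1) + 2 * b with hmdef
  have hm1 : 1 ≤ m := by
    have h1 : 0 < 2 * (n + 1) * (b + 1) := by positivity
    exact le_trans h1 (Nat.le_add_right _ _)
  have hcov' : ∀ v : Fin m → ℤ, ∃ p : Fin (n + 1) × Set EPt,
      p.2 ∈ U p.1 ∧ EptNoApc.P m hm1 v ∈ p.2 := by
    intro v
    have hv := hcov (Set.mem_univ (EptNoApc.P m hm1 v))
    rw [Set.mem_iUnion] at hv
    obtain ⟨i, hi⟩ := hv
    rw [Set.mem_sUnion] at hi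
    obtain ⟨A, hA, hvA⟩ := hi
    exact ⟨(i, A), hA, hvA⟩
  choose g hg1 hg2 using hcov'
  refine EptNoApc.growth hm1 fun L => ?_
  refine EptNoApc.assembly hmdef Prod.fst g ?_ ?_
  · -- Hdiam
    intro v w hgvw
    have h1 : EptNoApc.P m hm1 v ∈ (g v).2 := hg2 v
    have h2 : EptNoApc.P m hm1 w ∈ (g v).2 := by rw [hgvw]; exact hg2 w
    have hd : dist (EptNoApc.P m hm1 v) (EptNoApc.P m hm1 w) ≤ (b : ℝ) :=
      hb (g v).1 (g v).2 (hg1 v) _ h1 _ h2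
    rw [EptNoApc.dist_P] at hd
    exact_mod_cast hd
  · -- Hsep
    intro v w hfst hgvw
    have hAne : (g v).2 ≠ (g w).2 := by
      intro hsnd
      exact hgvw (Prod.ext hfst hsnd)
    have h2 : (g w).2 ∈ U (g v).1 := by rw [hfst]; exact hg1 w
    have hRd := hdisj ((g v).1 : ℕ)
    rw [Fin.cast_val_eq_self] at hRd
    have hd := hRd (g v).2 (hg1 v) (g w).2 h2 hAne
      (EptNoApc.P m hm1 v) (hg2 v) (EptNoApc.P m hm1 w) (hg2 w)
    rw [EptNoApc.dist_P] at hd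
    have h3 : (3 : ℝ) ≤ (EptNoApc.D v w : ℝ) := by
      have h0 : (0 : ℝ) ≤ (((g v).1 : ℕ) : ℝ) := by positivity
      linarith
    exact_mod_cast h3
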